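/- In a hidden Markov tree model, the conditional entropy of a state subtree given the parent state satisfies the upward recursion: for every non-root vertex u, H(S̄_u | S_{ρ(u)}, X = x) = Σ_{v∈c(u)} H(S̄_v | S_u, X = x) + H(S_u | S_{ρ(u)}, X = x), the sum being empty when u is a leaf. -/

import Mathlib

/-- A hidden Markov tree (HMT) model on a finite rooted tree with `n` vertices:
the root is `0` and the vertices are indexed in a topological order, i.e. every
non-root vertex has a parent with strictly smaller index.  The model has `J`
states and observation alphabet `{0, …, V-1}`, with initial probabilities (for
the root), transition probabilities and emission probabilities. -/
structure HMTModel (J V n : ℕ) [NeZero n] where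
  parent : Fin n → Fin n
  parent_lt : ∀ u : Fin n, u ≠ 0 → parent u < u
  init : Fin J → ℝ
  trans : Fin J → Fin J → ℝ
  emit : Fin J → Fin V → ℝ
  init_nonneg : ∀ j, 0 ≤ init j
  init_sum : ∑ j, init j = 1
  trans_nonneg : ∀ i j, 0 ≤ trans i j
  trans_sum : ∀ i, ∑ j, trans i j = 1
  emit_nonneg : ∀ j y, 0 ≤ emit j y
  emit_sum : ∀ j, ∑ y, emit j y = 1

namespace HMTModel

variable {J V n : ℕ} [NeZero J] [NeZero n]

/-- The joint law of the state tree and the observed tree: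
`P(S = s, X = x) = π_{s_0} (∏_{u ≠ 0} p_{s_{ρ(u)} s_u}) ∏_u b_{s_u}(x_u)`. -/
noncomputable def joint (M : HMTModel J V n) (s : Fin n → Fin J) (x : Fin n → Fin V) : ℝ :=
  M.init (s 0) *
    (∏ u ∈ Finset.univ.filter (fun u : Fin n => u ≠ 0), M.trans (s (M.parent u)) (s u)) *
    ∏ u : Fin n, M.emit (s u) (x u)

open Classical in
/-- Probability of an event on (state tree, observed tree). -/
noncomputable def pr (M : HMTModel J V n)
    (E : (Fin n → Fin J) → (Fin n → Fin V) → Prop) : ℝ :=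
  ∑ s : Fin n → Fin J, ∑ y : Fin n → Fin V, if E s y then M.joint s y else 0

/-- Conditional probability `P(A | B)`; it is `0` when the conditioning event
has probability zero. -/
noncomputable def cpr (M : HMTModel J V n)
    (A B : (Fin n → Fin J) → (Fin n → Fin V) → Prop) : ℝ :=
  if 0 < M.pr B then M.pr (fun s y => A s y ∧ B s y) / M.pr B else 0

/-- Entropy of the random vector `f(S)` given the event `E`
(natural logarithm, with the convention `0 log 0 = 0`). -/
noncomputable def condEnt (M : HMTModel J V n) {α : Type*} [Fintype α]
    (f : (Fin n → Fin J) → α)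
    (E : (Fin n → Fin J) → (Fin n → Fin V) → Prop) : ℝ :=
  -∑ a : α, M.cpr (fun s _ => f s = a) E * Real.log (M.cpr (fun s _ => f s = a) E)

/-- Entropy of `f(S)` given the random vector `g(S)` and the event `E`:
`H(f(S) | g(S), E) = ∑_c P(g(S) = c | E) H(f(S) | g(S) = c, E)`. -/
noncomputable def condEntGiven (M : HMTModel J V n) {α β : Type*} [Fintype α] [Fintype β]
    (f : (Fin n → Fin J) → α) (g : (Fin n → Fin J) → β)
    (E : (Fin n → Fin J) → (Fin n → Fin V) → Prop) : ℝ :=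
  ∑ c : β, M.cpr (fun s _ => g s = c) E * M.condEnt f (fun s y => g s = c ∧ E s y)

/-- The event `X = x`. -/
def obsEq (x : Fin n → Fin V) : (Fin n → Fin J) → (Fin n → Fin V) → Prop :=
  fun _ y => y = x

/-- `v` belongs to the complete subtree rooted at `u` (i.e. `u` is obtained
from `v` by repeatedly taking parents). -/
def inSubtree (M : HMTModel J V n) (u v : Fin n) : Prop :=
  Relation.ReflTransGen (fun a b : Fin n => a ≠ 0 ∧ M.parent a = b) v u

open Classical in
/-- The state subtree `S̄_u` rooted at `u` (coordinates outside the subtree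
are padded by `0`). -/
noncomputable def subVar (M : HMTModel J V n) (u : Fin n) (s : Fin n → Fin J) :
    Fin n → Fin J :=
  fun v => if M.inSubtree u v then s v else 0

open Classical in
/-- The collection `S̄_{c(u)}` of state subtrees rooted at the children of `u`
(all other coordinates padded by `0`). -/
noncomputable def childSubVar (M : HMTModel J V n) (u : Fin n) (s : Fin n → Fin J) :
    Fin n → Fin J :=
  fun v => if M.inSubtree u v ∧ v ≠ u then s v else 0

/-- The states `S_{c(u)}` of the children of `u` (all other coordinates padded
by `0`). -/
def childVar (M : HMTModel J V n) (u : Fin n) (s : Fin n → Fin J) :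
    Fin n → Fin J :=
  fun v => if v ≠ 0 ∧ M.parent v = u then s v else 0

/-- The states `(S_v)_{v ∈ Vs}` of a subset `Vs` of vertices (all other
coordinates padded by `0`). -/
def memVar (_M : HMTModel J V n) (Vs : Finset (Fin n)) (s : Fin n → Fin J) :
    Fin n → Fin J :=
  fun v => if v ∈ Vs then s v else 0

end HMTModel

open HMTModel


open Finset Real

namespace HMTAux

lemma mul_log_mul (p q : ℝ) (hp : 0 ≤ p) (hq : 0 ≤ q) :
    p * q * Real.log (p * q) = p * q * Real.log p + p * q * Real.log q := by
  rcases eq_or_lt_of_le hp with h | h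
  · simp [← h]
  rcases eq_or_lt_of_le hq with h' | h'
  · simp [← h']
  rw [Real.log_mul h.ne' h'.ne', mul_add]

variable {σ : Type*} [Fintype σ] (w : σ → ℝ)

lemma sum_ite_congr {σ' : Type*} [Fintype σ'] (p q : σ' → Prop) [∀ s, Decidable (p s)]
    [∀ s, Decidable (q s)] (h : ∀ s, p s ↔ q s) (f : σ' → ℝ) :
    (∑ s : σ', if p s then f s else 0) = ∑ s : σ', if q s then f s else 0 :=
  Finset.sum_congr rfl fun s _ => by
    by_cases hp : p s
    · rw [if_pos hp, if_pos ((h s).mp hp)]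
    · rw [if_neg hp, if_neg fun hq => hp ((h s).mpr hq)]

open Classical in
noncomputable def Wsum {α : Type*} (f : σ → α) (a : α) : ℝ :=
  ∑ s : σ, if f s = a then w s else 0

open Classical in
noncomputable def Fent {α : Type*} [Fintype α] (f : σ → α) : ℝ :=
  -∑ a : α, Wsum w f a * Real.log (Wsum w f a)

lemma Wsum_nonneg (hw : ∀ s, 0 ≤ w s) {α : Type*} (f : σ → α) (a : α) :
    0 ≤ Wsum w f a := by
  classical
  refine Finset.sum_nonneg fun s _ => ?_
  split <;> simp [hw s]

lemma Fent_eq_sum {α : Type*} [Fintype α] (f : σ → α) :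
    Fent w f = -∑ s : σ, w s * Real.log (Wsum w f (f s)) := by
  classical
  unfold Fent
  congr 1
  have : ∀ a : α, Wsum w f a * Real.log (Wsum w f a)
      = ∑ s : σ, if f s = a then w s * Real.log (Wsum w f a) else 0 := by
    intro a
    rw [Wsum, Finset.sum_mul]
    exact Finset.sum_congr rfl fun s _ => by split <;> simp
  rw [Finset.sum_congr rfl fun a _ => this a, Finset.sum_comm]
  refine Finset.sum_congr rfl fun s _ => ?_
  rw [Finset.sum_ite_eq]
  simp

lemma Fent_congr {α β : Type*} [Fintype α] [Fintype β] (f : σ → α) (g : σ → β)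
    (h : ∀ s s', f s = f s' ↔ g s = g s') : Fent w f = Fent w g := by
  classical
  rw [Fent_eq_sum, Fent_eq_sum]
  congr 1
  refine Finset.sum_congr rfl fun s _ => ?_
  have : Wsum w f (f s) = Wsum w g (g s) := by
    unfold Wsum
    refine Finset.sum_congr rfl fun s' _ => ?_
    rw [if_congr (h s' s) rfl rfl]
  rw [this]

lemma Wsum_pair_marg {α β : Type*} [Fintype β] (f : σ → α) (g : σ → β) (a : α) :
    ∑ b : β, Wsum w (fun s => (f s, g s)) (a, b) = Wsum w f a := by
  classical
  unfold Wsum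
  rw [Finset.sum_comm]
  refine Finset.sum_congr rfl fun s _ => ?_
  simp only [Prod.mk.injEq]
  rw [Finset.sum_congr rfl fun b _ => (ite_and (f s = a) (g s = b) (w s) 0)]
  by_cases h : f s = a <;> simp [h, Finset.sum_ite_eq]

lemma Wsum_pair_marg_mid {γ α β : Type*} [Fintype α] (C : σ → γ) (A : σ → α) (B : σ → β)
    (c : γ) (b : β) :
    ∑ a : α, Wsum w (fun s => ((C s, A s), B s)) ((c, a), b)
      = Wsum w (fun s => (C s, B s)) (c, b) := by
  classical
  unfold Wsum
  rw [Finset.sum_comm]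
  refine Finset.sum_congr rfl fun s _ => ?_
  simp only [Prod.mk.injEq]
  have : ∀ a : α, ((C s = c ∧ A s = a) ∧ B s = b) ↔ ((C s = c ∧ B s = b) ∧ A s = a) := by
    intro a; tauto
  rw [Finset.sum_congr rfl fun a _ => if_congr (this a) rfl rfl]
  rw [Finset.sum_congr rfl fun a _ => (ite_and (C s = c ∧ B s = b) (A s = a) (w s) 0)]
  by_cases h : C s = c ∧ B s = b <;> simp [h, Finset.sum_ite_eq]

lemma Wsum_pair_marg_fst {α β : Type*} [Fintype α] (f : σ → α) (g : σ → β) (c : β) :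
    ∑ a : α, Wsum w (fun s => (f s, g s)) (a, c) = Wsum w g c := by
  classical
  unfold Wsum
  rw [Finset.sum_comm]
  refine Finset.sum_congr rfl fun s _ => ?_
  simp only [Prod.mk.injEq]
  have h : ∀ a : α, (f s = a ∧ g s = c) ↔ (g s = c ∧ f s = a) := fun a => and_comm
  rw [Finset.sum_congr rfl fun a _ => if_congr (h a) rfl rfl]
  rw [Finset.sum_congr rfl fun a _ => (ite_and (g s = c) (f s = a) (w s) 0)]
  by_cases hgc : g s = c <;> simp [hgc, Finset.sum_ite_eq]

lemma sum_ite_point {κ : Type*} [Fintype κ] (p : κ → Prop) [∀ y, Decidable (p y)]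
    (x0 : κ) (hp : ∀ y, p y ↔ y = x0) (f : κ → ℝ) :
    (∑ y : κ, if p y then f y else 0) = f x0 := by
  rw [Finset.sum_eq_single x0 (fun b _ hb => if_neg fun h => hb ((hp b).mp h))
    (fun h => absurd (Finset.mem_univ x0) h), if_pos ((hp x0).mpr rfl)]

lemma sum_mul_log_mul {β : Type*} [Fintype β] (p : ℝ) (hp : 0 ≤ p) (H : β → ℝ)
    (hH : ∀ b, 0 ≤ H b) :
    ∑ b : β, (p * H b) * Real.log (p * H b)
      = p * Real.log p * (∑ b : β, H b) + p * (∑ b : β, H b * Real.log (H b)) := by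
  rw [Finset.mul_sum, Finset.mul_sum, ← Finset.sum_add_distrib]
  refine Finset.sum_congr rfl fun b _ => ?_
  rw [mul_log_mul p (H b) hp (hH b)]; ring

lemma sum_mul_log_mul' {α : Type*} [Fintype α] (G : α → ℝ) (hG : ∀ a, 0 ≤ G a)
    (q : ℝ) (hq : 0 ≤ q) :
    ∑ a : α, (G a * q) * Real.log (G a * q)
      = (∑ a : α, G a * Real.log (G a)) * q + (∑ a : α, G a) * q * Real.log q := by
  have h : ∀ a, (G a * q) * Real.log (G a * q)
      = (G a * Real.log (G a)) * q + G a * (q * Real.log q) := by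
    intro a; rw [mul_log_mul (G a) q (hG a) hq]; ring
  rw [Finset.sum_congr rfl fun a _ => h a, Finset.sum_add_distrib, ← Finset.sum_mul,
    ← Finset.sum_mul]
  ring

lemma Fent_split (hw : ∀ s, 0 ≤ w s) {γ α β : Type*} [Fintype γ] [Fintype α] [Fintype β]
    (C : σ → γ) (A : σ → α) (B : σ → β) (G : γ → α → ℝ) (H : γ → β → ℝ)
    (hG : ∀ c a, 0 ≤ G c a) (hH : ∀ c b, 0 ≤ H c b)
    (hfac : ∀ c a b, Wsum w (fun s => ((C s, A s), B s)) ((c, a), b) = G c a * H c b) :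
    Fent w (fun s => ((C s, A s), B s)) + Fent w C
      = Fent w (fun s => (C s, A s)) + Fent w (fun s => (C s, B s)) := by
  classical
  set SG : γ → ℝ := fun c => ∑ a, G c a with hSG
  set SH : γ → ℝ := fun c => ∑ b, H c b with hSH
  have hSGn : ∀ c, 0 ≤ SG c := fun c => Finset.sum_nonneg fun a _ => hG c a
  have hSHn : ∀ c, 0 ≤ SH c := fun c => Finset.sum_nonneg fun b _ => hH c b
  have eCA : ∀ c a, Wsum w (fun s => (C s, A s)) (c, a) = G c a * SH c := by
    intro c a
    rw [← Wsum_pair_marg w (fun s => (C s, A s)) B (c, a)]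
    rw [Finset.sum_congr rfl fun b _ => hfac c a b, ← Finset.mul_sum]
  have eCB : ∀ c b, Wsum w (fun s => (C s, B s)) (c, b) = SG c * H c b := by
    intro c b
    rw [← Wsum_pair_marg_mid w C A B c b]
    rw [Finset.sum_congr rfl fun a _ => hfac c a b, ← Finset.sum_mul]
  have eC : ∀ c, Wsum w C c = SG c * SH c := by
    intro c
    rw [← Wsum_pair_marg w C A c, Finset.sum_congr rfl fun a _ => eCA c a, ← Finset.sum_mul]
  have repr3 : Fent w (fun s => ((C s, A s), B s))
      = -∑ c, ∑ a, ∑ b, (G c a * H c b) * Real.log (G c a * H c b) := by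
    rw [Fent, Fintype.sum_prod_type, Fintype.sum_prod_type]
    exact congrArg Neg.neg (Finset.sum_congr rfl fun c _ => Finset.sum_congr rfl fun a _ =>
      Finset.sum_congr rfl fun b _ => by rw [hfac])
  have reprCA : Fent w (fun s => (C s, A s))
      = -∑ c, ∑ a, (G c a * SH c) * Real.log (G c a * SH c) := by
    rw [Fent, Fintype.sum_prod_type]
    exact congrArg Neg.neg (Finset.sum_congr rfl fun c _ => Finset.sum_congr rfl fun a _ =>
      by rw [eCA])
  have reprCB : Fent w (fun s => (C s, B s))
      = -∑ c, ∑ b, (SG c * H c b) * Real.log (SG c * H c b) := by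
    rw [Fent, Fintype.sum_prod_type]
    exact congrArg Neg.neg (Finset.sum_congr rfl fun c _ => Finset.sum_congr rfl fun b _ =>
      by rw [eCB])
  have reprC : Fent w C = -∑ c, (SG c * SH c) * Real.log (SG c * SH c) := by
    rw [Fent]
    exact congrArg Neg.neg (Finset.sum_congr rfl fun c _ => by rw [eC])
  rw [repr3, reprCA, reprCB, reprC, ← neg_add, ← neg_add, ← Finset.sum_add_distrib,
    ← Finset.sum_add_distrib]
  refine congrArg Neg.neg (Finset.sum_congr rfl fun c _ => ?_)
  have h1 : ∑ a, ∑ b, (G c a * H c b) * Real.log (G c a * H c b)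
      = (∑ a, G c a * Real.log (G c a)) * SH c + SG c * (∑ b, H c b * Real.log (H c b)) := by
    rw [Finset.sum_congr rfl fun a _ => sum_mul_log_mul (G c a) (hG c a) (H c) (hH c),
      Finset.sum_add_distrib, ← Finset.sum_mul, ← Finset.sum_mul]
  have h2 : ∑ a, (G c a * SH c) * Real.log (G c a * SH c)
      = (∑ a, G c a * Real.log (G c a)) * SH c + SG c * SH c * Real.log (SH c) :=
    sum_mul_log_mul' (G c) (hG c) (SH c) (hSHn c)
  have h3 : ∑ b, (SG c * H c b) * Real.log (SG c * H c b)
      = SG c * Real.log (SG c) * SH c + SG c * (∑ b, H c b * Real.log (H c b)) :=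
    sum_mul_log_mul (SG c) (hSGn c) (H c) (hH c)
  have h4 : (SG c * SH c) * Real.log (SG c * SH c)
      = SG c * SH c * Real.log (SG c) + SG c * SH c * Real.log (SH c) :=
    mul_log_mul (SG c) (SH c) (hSGn c) (hSHn c)
  rw [h1, h2, h3, h4]; ring

open Classical in
lemma Fent_multi_split {γ τ ι : Type*} [DecidableEq ι] [Fintype γ] [Fintype τ] [Nonempty τ]
    (hw : ∀ s, 0 ≤ w s)
    (C : σ → γ) (Y : ι → σ → τ) (I : Finset ι)
    (K : γ → ℝ) (G : ι → γ → τ → ℝ)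
    (hK : ∀ c, 0 ≤ K c) (hG : ∀ i c t, 0 ≤ G i c t)
    (hfac : ∀ c (t : ι → τ),
      (∑ s : σ, if C s = c ∧ ∀ i ∈ I, Y i s = t i then w s else 0)
        = K c * ∏ i ∈ I, G i c (t i)) :
    Fent w (fun s => (C s, fun i : {i // i ∈ I} => Y i.1 s))
      = (∑ i ∈ I, Fent w (fun s => (C s, Y i s))) - ((I.card : ℝ) - 1) * Fent w C := by
  classical
  induction I using Finset.induction_on generalizing K with
  | empty =>
      have : Fent w (fun s => (C s, fun i : {i // i ∈ (∅ : Finset ι)} => Y i.1 s))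
          = Fent w C := by
        refine Fent_congr w _ _ fun s s' => ?_
        simp only [Prod.mk.injEq]
        constructor
        · exact fun h => h.1
        · intro h
          exact ⟨h, funext fun i => absurd i.2 (Finset.notMem_empty _)⟩
      rw [this]; simp
  | @insert i0 I' hi0 ih =>
      -- the remaining components as a single block
      set B : σ → ({i // i ∈ I'} → τ) := fun s => fun i => Y i.1 s with hB
      have hfac' : ∀ c (t : ι → τ),
          (∑ s : σ, if C s = c ∧ ∀ i ∈ I', Y i s = t i then w s else 0)
            = (K c * ∑ a : τ, G i0 c a) * ∏ i ∈ I', G i c (t i) := by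
        intro c t
        have step : ∀ s : σ,
            (if C s = c ∧ ∀ i ∈ I', Y i s = t i then w s else 0)
              = ∑ a : τ, (if C s = c ∧ ∀ i ∈ insert i0 I', Y i s = (Function.update t i0 a) i
                  then w s else 0) := by
          intro s
          have hcond : ∀ a : τ,
              (C s = c ∧ ∀ i ∈ insert i0 I', Y i s = (Function.update t i0 a) i)
                ↔ ((C s = c ∧ ∀ i ∈ I', Y i s = t i) ∧ Y i0 s = a) := by
            intro a
            constructor
            · rintro ⟨h1, h2⟩
              refine ⟨⟨h1, fun i hi => ?_⟩, ?_⟩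
              · have hne : i ≠ i0 := by rintro rfl; exact hi0 hi
                have := h2 i (Finset.mem_insert_of_mem hi)
                rwa [Function.update_of_ne hne] at this
              · have := h2 i0 (Finset.mem_insert_self _ _)
                rwa [Function.update_self] at this
            · rintro ⟨⟨h1, h2⟩, h3⟩
              refine ⟨h1, fun i hi => ?_⟩
              rcases Finset.mem_insert.mp hi with hq | hi2
              · subst hq; rwa [Function.update_self]
              · have hne : i ≠ i0 := by rintro rfl; exact hi0 hi2
                rw [Function.update_of_ne hne]
                exact h2 i hi2
          rw [Finset.sum_congr rfl fun a _ => if_congr (hcond a) rfl rfl]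
          rw [Finset.sum_congr rfl fun a _ =>
            (ite_and (C s = c ∧ ∀ i ∈ I', Y i s = t i) (Y i0 s = a) (w s) 0)]
          by_cases h : C s = c ∧ ∀ i ∈ I', Y i s = t i <;>
            simp [h, Finset.sum_ite_eq]
        rw [Finset.sum_congr rfl fun s _ => step s, Finset.sum_comm]
        have : ∀ a : τ,
            (∑ s : σ, if C s = c ∧ ∀ i ∈ insert i0 I', Y i s = (Function.update t i0 a) i
              then w s else 0) = K c * (G i0 c a * ∏ i ∈ I', G i c (t i)) := by
          intro a
          rw [hfac c (Function.update t i0 a), Finset.prod_insert hi0, Function.update_self]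
          congr 1
          congr 1
          refine Finset.prod_congr rfl fun i hi => ?_
          have hne : i ≠ i0 := by rintro rfl; exact hi0 hi
          rw [Function.update_of_ne hne]
        rw [Finset.sum_congr rfl fun a _ => this a, ← Finset.mul_sum, ← Finset.sum_mul]
        ring
      have ihres := ih (K := fun c => K c * ∑ a : τ, G i0 c a)
        (fun c => mul_nonneg (hK c) (Finset.sum_nonneg fun a _ => hG i0 c a)) hfac'
      -- two-block split
      have hfac2 : ∀ (c : γ) (a : τ) (b : {i // i ∈ I'} → τ),
          Wsum w (fun s => ((C s, Y i0 s), B s)) ((c, a), b)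
            = G i0 c a * (K c * ∏ i ∈ I'.attach, G i.1 c (b i)) := by
        intro c a b
        set t : ι → τ := fun i => if h : i ∈ I' then b ⟨i, h⟩ else a with ht
        have hcond : ∀ s : σ, (((C s, Y i0 s), B s) = ((c, a), b))
            ↔ (C s = c ∧ ∀ i ∈ insert i0 I', Y i s = t i) := by
          intro s
          simp only [Prod.mk.injEq, funext_iff, hB]
          constructor
          · rintro ⟨⟨h1, h2⟩, h3⟩
            refine ⟨h1, fun i hi => ?_⟩
            rcases Finset.mem_insert.mp hi with hq | hi2
            · subst hq; rw [ht]; simp only [dif_neg hi0]; exact h2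
            · rw [ht]; simp only [dif_pos hi2]; exact h3 ⟨i, hi2⟩
          · rintro ⟨h1, h2⟩
            refine ⟨⟨h1, ?_⟩, fun i => ?_⟩
            · have := h2 i0 (Finset.mem_insert_self _ _)
              simpa only [ht, dif_neg hi0] using this
            · have := h2 i.1 (Finset.mem_insert_of_mem i.2)
              simpa only [ht, dif_pos i.2, Subtype.coe_eta] using this
        have e1 : Wsum w (fun s => ((C s, Y i0 s), B s)) ((c, a), b)
            = ∑ s : σ, if C s = c ∧ ∀ i ∈ insert i0 I', Y i s = t i then w s else 0 := by
          simp only [Wsum]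
          refine Finset.sum_congr rfl fun s _ => ?_
          by_cases hp : C s = c ∧ ∀ i ∈ insert i0 I', Y i s = t i
          · rw [if_pos ((hcond s).mpr hp), if_pos hp]
          · rw [if_neg (fun hq => hp ((hcond s).mp hq)), if_neg hp]
        rw [e1, hfac c t, Finset.prod_insert hi0]
        have : ∏ i ∈ I', G i c (t i) = ∏ i ∈ I'.attach, G i.1 c (b i) := by
          rw [← Finset.prod_attach I' (fun i => G i c (t i))]
          refine Finset.prod_congr rfl fun i _ => ?_
          rw [ht]; simp [dif_pos i.2]
        rw [this, ht]
        simp only [dif_neg hi0]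
        ring
      have split := Fent_split w hw C (fun s => Y i0 s) B (fun c a => G i0 c a)
        (fun c b => K c * ∏ i ∈ I'.attach, G i.1 c (b i))
        (fun c a => hG i0 c a)
        (fun c b => mul_nonneg (hK c) (Finset.prod_nonneg fun i _ => hG i.1 c (b i)))
        hfac2
      have hcongr : Fent w (fun s => (C s, fun i : {i // i ∈ insert i0 I'} => Y i.1 s))
          = Fent w (fun s => ((C s, Y i0 s), B s)) := by
        refine Fent_congr w _ _ fun s s' => ?_
        simp only [Prod.mk.injEq, funext_iff, Subtype.forall, hB]
        constructor
        · rintro ⟨h1, h2⟩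
          exact ⟨⟨h1, h2 i0 (Finset.mem_insert_self _ _)⟩,
            fun i hi => h2 i (Finset.mem_insert_of_mem hi)⟩
        · rintro ⟨⟨h1, h2⟩, h3⟩
          refine ⟨h1, fun i hi => ?_⟩
          rcases Finset.mem_insert.mp hi with hq | hi2
          · subst hq; exact h2
          · exact h3 i hi2
      rw [hcongr]
      have : Fent w (fun s => ((C s, Y i0 s), B s))
          = Fent w (fun s => (C s, Y i0 s)) + Fent w (fun s => (C s, B s)) - Fent w C := by
        linarith [split]
      rw [this]
      have hCB : Fent w (fun s => (C s, B s))
          = Fent w (fun s => (C s, fun i : {i // i ∈ I'} => Y i.1 s)) := rfl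
      rw [hCB, ihres, Finset.sum_insert hi0, Finset.card_insert_of_notMem hi0]
      push_cast
      ring

end HMTAux

namespace HMTProof

open HMTModel HMTAux Finset Real

variable {J V n : ℕ} [NeZero J] [NeZero n]

/-! ### Tree lemmas -/

lemma inSubtree_refl (M : HMTModel J V n) (u : Fin n) : M.inSubtree u u :=
  Relation.ReflTransGen.refl

lemma le_of_inSubtree (M : HMTModel J V n) {u v : Fin n} (h : M.inSubtree u v) : u ≤ v := by
  unfold inSubtree at h
  induction h with
  | refl => exact le_refl _
  | tail hvb hbc ih =>
      have h1 : M.parent _ < _ := M.parent_lt _ hbc.1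
      rw [hbc.2] at h1
      exact le_of_lt (lt_of_lt_of_le h1 ih)

lemma child_inSubtree (M : HMTModel J V n) {u v w : Fin n} (h1 : v ≠ 0)
    (h2 : M.parent v = u) (h : M.inSubtree v w) : M.inSubtree u w :=
  Relation.ReflTransGen.tail h ⟨h1, h2⟩

lemma inSubtree_cases (M : HMTModel J V n) {u w : Fin n} (h : M.inSubtree u w) :
    w = u ∨ ∃ v, (v ≠ 0 ∧ M.parent v = u) ∧ M.inSubtree v w := by
  rcases Relation.ReflTransGen.cases_tail h with heq | ⟨b, hwb, hbu⟩
  · exact Or.inl heq.symm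
  · exact Or.inr ⟨b, hbu, hwb⟩

lemma step_into (M : HMTModel J V n) {u w : Fin n} (h : M.inSubtree u w) (hne : w ≠ u) :
    w ≠ 0 ∧ M.inSubtree u (M.parent w) := by
  rcases Relation.ReflTransGen.cases_head h with heq | ⟨b, hwb, hbu⟩
  · exact absurd heq hne
  · exact ⟨hwb.1, hwb.2 ▸ hbu⟩

lemma not_inSubtree_parent (M : HMTModel J V n) {u : Fin n} (hu : u ≠ 0) :
    ¬ M.inSubtree u (M.parent u) := fun h =>
  absurd (M.parent_lt u hu) (not_lt.mpr (le_of_inSubtree M h))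

lemma not_inSubtree_of_lt (M : HMTModel J V n) {u v : Fin n} (h : v < u) :
    ¬ M.inSubtree u v := fun hh => absurd (le_of_inSubtree M hh) (not_le.mpr h)

lemma outside_parent (M : HMTModel J V n) {u w : Fin n} (hw : ¬ M.inSubtree u w)
    (h0 : w ≠ 0) : ¬ M.inSubtree u (M.parent w) := fun h =>
  hw (Relation.ReflTransGen.head ⟨h0, rfl⟩ h)

lemma rtg_total (M : HMTModel J V n) {v v' : Fin n} :
    ∀ {w : Fin n}, M.inSubtree v w → M.inSubtree v' w →
      M.inSubtree v' v ∨ M.inSubtree v v' := by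
  intro w h1 h2
  unfold inSubtree at h1 h2 ⊢
  induction h1 using Relation.ReflTransGen.head_induction_on with
  | refl => exact Or.inl h2
  | @head a c hac hcv ih =>
      rcases Relation.ReflTransGen.cases_head h2 with heq | ⟨b, hab, hbv'⟩
      · subst heq
        exact Or.inr (Relation.ReflTransGen.head hac hcv)
      · have hbc : b = c := by rw [← hab.2, ← hac.2]
        subst hbc
        exact ih hbv'

lemma child_unique (M : HMTModel J V n) {u v v' w : Fin n}
    (hv : v ≠ 0 ∧ M.parent v = u) (hv' : v' ≠ 0 ∧ M.parent v' = u)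
    (h : M.inSubtree v w) (h' : M.inSubtree v' w) : v = v' := by
  have aux : ∀ a b : Fin n, (a ≠ 0 ∧ M.parent a = u) → (b ≠ 0 ∧ M.parent b = u) →
      M.inSubtree b a → a = b := by
    intro a b ha hb hab
    rcases Relation.ReflTransGen.cases_head hab with heq | ⟨d, had, hdb⟩
    · exact heq
    · exfalso
      have hd : d = u := by rw [← had.2, ha.2]
      have h1 : b ≤ u := hd ▸ le_of_inSubtree M hdb
      have h2 : u < b := hb.2 ▸ M.parent_lt b hb.1
      exact absurd h1 (not_le.mpr h2)
  rcases rtg_total M h h' with hh | hh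
  · exact aux v v' hv hv' hh
  · exact (aux v' v hv' hv hh).symm

lemma u_notin_child_subtree (M : HMTModel J V n) {u v : Fin n}
    (hv : v ≠ 0 ∧ M.parent v = u) : ¬ M.inSubtree v u := by
  intro h
  have h1 : v ≤ u := le_of_inSubtree M h
  have h2 : u < v := hv.2 ▸ M.parent_lt v hv.1
  exact absurd h1 (not_le.mpr h2)

lemma parent_notin_ch (M : HMTModel J V n) {u : Fin n} (hu : u ≠ 0) :
    ¬ (M.parent u ≠ 0 ∧ M.parent (M.parent u) = u) := by
  rintro ⟨h1, h2⟩
  have h3 : M.parent (M.parent u) < M.parent u := M.parent_lt _ h1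
  have h4 : M.parent u < u := M.parent_lt u hu
  rw [h2] at h3
  exact absurd (h3.trans h4) (lt_irrefl u)

/-! ### The weight function and local terms -/

noncomputable def wgt (M : HMTModel J V n) (x : Fin n → Fin V) : (Fin n → Fin J) → ℝ :=
  fun s => M.joint s x

lemma wgt_nonneg (M : HMTModel J V n) (x : Fin n → Fin V) (s : Fin n → Fin J) :
    0 ≤ wgt M x s :=
  mul_nonneg (mul_nonneg (M.init_nonneg _)
    (Finset.prod_nonneg fun v _ => M.trans_nonneg _ _))
    (Finset.prod_nonneg fun v _ => M.emit_nonneg _ _)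

noncomputable def term (M : HMTModel J V n) (x : Fin n → Fin V) (s : Fin n → Fin J)
    (v : Fin n) : ℝ :=
  (if v = 0 then M.init (s 0) else M.trans (s (M.parent v)) (s v)) * M.emit (s v) (x v)

lemma term_nonneg (M : HMTModel J V n) (x : Fin n → Fin V) (s : Fin n → Fin J)
    (v : Fin n) : 0 ≤ term M x s v := by
  refine mul_nonneg ?_ (M.emit_nonneg _ _)
  split
  · exact M.init_nonneg _
  · exact M.trans_nonneg _ _

lemma term_congr (M : HMTModel J V n) (x : Fin n → Fin V) {s s' : Fin n → Fin J}
    {v : Fin n} (hv : s v = s' v) (hp : v ≠ 0 → s (M.parent v) = s' (M.parent v)) :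
    term M x s v = term M x s' v := by
  unfold term
  by_cases h : v = 0
  · subst h; rw [if_pos rfl, if_pos rfl, hv]
  · rw [if_neg h, if_neg h, hv, hp h]

lemma joint_eq_prod_term (M : HMTModel J V n) (x : Fin n → Fin V) (s : Fin n → Fin J) :
    M.joint s x = ∏ v : Fin n, term M x s v := by
  unfold joint term
  rw [Finset.prod_mul_distrib]
  congr 1
  have h0 : (0 : Fin n) ∈ (Finset.univ : Finset (Fin n)) := Finset.mem_univ _
  rw [← Finset.mul_prod_erase Finset.univ _ h0, if_pos rfl]
  congr 1
  · have : Finset.univ.filter (fun v : Fin n => v ≠ 0) = Finset.univ.erase 0 := by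
      ext a; simp [Finset.mem_erase, and_comm]
    rw [this]
    refine Finset.prod_congr rfl fun v hv => ?_
    rw [if_neg (Finset.mem_erase.mp hv).1]

/-! ### Probability computations -/

lemma pr_congr (M : HMTModel J V n) (E E' : (Fin n → Fin J) → (Fin n → Fin V) → Prop)
    (h : ∀ s y, E s y ↔ E' s y) : M.pr E = M.pr E' := by
  unfold pr
  refine Finset.sum_congr rfl fun s _ => Finset.sum_congr rfl fun y _ => ?_
  by_cases hE : E s y
  · rw [if_pos hE, if_pos ((h s y).mp hE)]
  · rw [if_neg hE, if_neg fun hE' => hE ((h s y).mpr hE')]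

open Classical in
lemma pr_and_obs (M : HMTModel J V n) (x : Fin n → Fin V) (P : (Fin n → Fin J) → Prop) :
    M.pr (fun s y => P s ∧ obsEq x s y)
      = ∑ s : Fin n → Fin J, if P s then M.joint s x else 0 := by
  classical
  unfold pr obsEq
  refine Finset.sum_congr rfl fun s _ => ?_
  by_cases hP : P s
  · rw [if_pos hP]
    exact @sum_ite_point _ _ (fun y => P s ∧ y = x) (fun y => Classical.propDecidable _)
      x (fun y => by tauto) (M.joint s)
  · rw [if_neg hP]
    exact Finset.sum_eq_zero fun y _ => if_neg fun h => hP h.1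

lemma pr_obsEq (M : HMTModel J V n) (x : Fin n → Fin V) :
    M.pr (obsEq x) = ∑ s : Fin n → Fin J, M.joint s x := by
  unfold pr obsEq
  refine Finset.sum_congr rfl fun s _ => ?_
  exact @sum_ite_point _ _ (fun y => y = x) (fun y => Classical.propDecidable _)
    x (fun y => Iff.rfl) (M.joint s)

open Classical in
lemma pr_eq_Wsum (M : HMTModel J V n) (x : Fin n → Fin V) {α : Type*}
    (f : (Fin n → Fin J) → α) (a : α) :
    M.pr (fun s y => f s = a ∧ obsEq x s y) = Wsum (wgt M x) f a := by
  rw [pr_and_obs M x (fun s => f s = a)]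
  rfl

open Classical in
lemma condEntGiven_eq (M : HMTModel J V n) (x : Fin n → Fin V) {α β : Type*}
    [Fintype α] [Fintype β]
    (hx : 0 < M.pr (obsEq x)) (f : (Fin n → Fin J) → α) (g : (Fin n → Fin J) → β) :
    M.condEntGiven f g (obsEq x)
      = (Fent (wgt M x) (fun s => (f s, g s)) - Fent (wgt M x) g)
          / (∑ s : Fin n → Fin J, M.joint s x) := by
  classical
  set w := wgt M x with hwdef
  set Z := ∑ s : Fin n → Fin J, M.joint s x with hZdef
  have hZ : 0 < Z := by rw [hZdef, ← pr_obsEq M x]; exact hx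
  have hwn : ∀ s, 0 ≤ w s := wgt_nonneg M x
  have hprB : ∀ c : β, M.pr (fun s y => g s = c ∧ obsEq x s y) = Wsum w g c :=
    fun c => pr_eq_Wsum M x g c
  have hprAB : ∀ (a : α) (c : β),
      M.pr (fun s y => (f s = a) ∧ (g s = c ∧ obsEq x s y))
        = Wsum w (fun s => (f s, g s)) (a, c) := by
    intro a c
    rw [pr_congr M _ (fun s y => (fun s => (f s, g s)) s = (a, c) ∧ obsEq x s y)
      (fun s y => by simp only [Prod.mk.injEq]; tauto)]
    exact pr_eq_Wsum M x (fun s => (f s, g s)) (a, c)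
  have hcg : ∀ c, M.cpr (fun s _ => g s = c) (obsEq x) = Wsum w g c / Z := by
    intro c
    rw [cpr, if_pos hx]
    rw [show M.pr (fun s y => g s = c ∧ obsEq x s y) = Wsum w g c from hprB c,
      show M.pr (obsEq x) = Z from pr_obsEq M x]
  have hq : ∀ (a : α) (c : β),
      M.cpr (fun s _ => f s = a) (fun s y => g s = c ∧ obsEq x s y)
        = if 0 < Wsum w g c then Wsum w (fun s => (f s, g s)) (a, c) / Wsum w g c
          else 0 := by
    intro a c
    rw [cpr, hprB c, hprAB a c]
  unfold condEntGiven condEnt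
  simp only [hcg, hq]
  have key : ∀ c : β,
      Wsum w g c / Z * -∑ a : α,
          (if 0 < Wsum w g c then Wsum w (fun s => (f s, g s)) (a, c) / Wsum w g c else 0)
            * Real.log (if 0 < Wsum w g c
                then Wsum w (fun s => (f s, g s)) (a, c) / Wsum w g c else 0)
        = (-(∑ a : α, Wsum w (fun s => (f s, g s)) (a, c)
              * Real.log (Wsum w (fun s => (f s, g s)) (a, c)))
            + Wsum w g c * Real.log (Wsum w g c)) / Z := by
    intro c
    have hsum : ∑ a : α, Wsum w (fun s => (f s, g s)) (a, c) = Wsum w g c :=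
      Wsum_pair_marg_fst w f g c
    by_cases hWc : 0 < Wsum w g c
    · simp only [if_pos hWc]
      have hterm : ∀ a : α,
          Wsum w (fun s => (f s, g s)) (a, c) / Wsum w g c
              * Real.log (Wsum w (fun s => (f s, g s)) (a, c) / Wsum w g c)
            = (Wsum w (fun s => (f s, g s)) (a, c)
                  * Real.log (Wsum w (fun s => (f s, g s)) (a, c))
                - Wsum w (fun s => (f s, g s)) (a, c) * Real.log (Wsum w g c))
                / Wsum w g c := by
        intro a
        rcases eq_or_lt_of_le (Wsum_nonneg w hwn (fun s => (f s, g s)) (a, c))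
          with h0 | hpos
        · rw [← h0]; simp
        · rw [Real.log_div hpos.ne' hWc.ne']
          field_simp
      rw [Finset.sum_congr rfl fun a _ => hterm a, ← Finset.sum_div,
        Finset.sum_sub_distrib, ← Finset.sum_mul, hsum]
      field_simp
      ring
    · have h0 : Wsum w g c = 0 := le_antisymm (not_lt.mp hWc) (Wsum_nonneg w hwn g c)
      have hWp : ∀ a : α, Wsum w (fun s => (f s, g s)) (a, c) = 0 := by
        intro a
        have hle : Wsum w (fun s => (f s, g s)) (a, c) ≤ Wsum w g c := by
          rw [← hsum]
          exact Finset.single_le_sum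
            (fun a' _ => Wsum_nonneg w hwn (fun s => (f s, g s)) (a', c))
            (Finset.mem_univ a)
        exact le_antisymm (h0 ▸ hle) (Wsum_nonneg w hwn (fun s => (f s, g s)) (a, c))
      simp [if_neg hWc, h0, hWp]
  rw [Finset.sum_congr rfl fun c _ => key c]
  rw [← Finset.sum_div]
  congr 1
  rw [Finset.sum_add_distrib]
  have hFp : Fent w (fun s => (f s, g s))
      = ∑ c : β, -(∑ a : α, Wsum w (fun s => (f s, g s)) (a, c)
          * Real.log (Wsum w (fun s => (f s, g s)) (a, c))) := by
    rw [Fent, Fintype.sum_prod_type, Finset.sum_comm, ← Finset.sum_neg_distrib]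
  rw [hFp, Fent, sub_neg_eq_add]

/-! ### The factorization of the fiber weights -/

open Classical in
noncomputable def outP (M : HMTModel J V n) (x : Fin n → Fin V) (u : Fin n)
    (s : Fin n → Fin J) : ℝ :=
  ∏ w ∈ Finset.univ.filter (fun w => ¬ M.inSubtree u w), term M x s w

open Classical in
noncomputable def inP (M : HMTModel J V n) (x : Fin n → Fin V) (v : Fin n)
    (t : Fin n → Fin J) : ℝ :=
  (∏ w ∈ (Finset.univ.filter (fun w => M.inSubtree v w)).erase v, term M x t w)
    * M.emit (t v) (x v)

open Classical in
noncomputable def Acoef (M : HMTModel J V n) (x : Fin n → Fin V) (u : Fin n)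
    (i : Fin J) : ℝ :=
  ∑ s : Fin n → Fin J,
    if s (M.parent u) = i ∧ (∀ w, M.inSubtree u w → s w = 0) then outP M x u s else 0

open Classical in
noncomputable def Gcomp (M : HMTModel J V n) (x : Fin n → Fin V) (u v : Fin n)
    (c : Fin J) (t : Fin n → Fin J) : ℝ :=
  if v = M.parent u then
    (if ∀ w, w ≠ M.parent u → t w = 0
      then Acoef M x u (t (M.parent u)) * M.trans (t (M.parent u)) c else 0)
  else
    (if ∀ w, ¬ M.inSubtree v w → t w = 0
      then M.trans c (t v) * inP M x v t else 0)

def chS (M : HMTModel J V n) (u : Fin n) : Finset (Fin n) :=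
  Finset.univ.filter (fun v => v ≠ 0 ∧ M.parent v = u)

noncomputable def Ycomp (M : HMTModel J V n) (u : Fin n) :
    Fin n → (Fin n → Fin J) → (Fin n → Fin J) :=
  fun v => if v = M.parent u then M.memVar {M.parent u} else M.subVar v

lemma outP_nonneg (M : HMTModel J V n) (x : Fin n → Fin V) (u : Fin n)
    (s : Fin n → Fin J) : 0 ≤ outP M x u s :=
  Finset.prod_nonneg fun w _ => term_nonneg M x s w

lemma inP_nonneg (M : HMTModel J V n) (x : Fin n → Fin V) (v : Fin n)
    (t : Fin n → Fin J) : 0 ≤ inP M x v t :=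
  mul_nonneg (Finset.prod_nonneg fun w _ => term_nonneg M x t w) (M.emit_nonneg _ _)

lemma Acoef_nonneg (M : HMTModel J V n) (x : Fin n → Fin V) (u : Fin n) (i : Fin J) :
    0 ≤ Acoef M x u i := by
  refine Finset.sum_nonneg fun s _ => ?_
  split
  · exact outP_nonneg M x u s
  · exact le_refl 0

lemma Gcomp_nonneg (M : HMTModel J V n) (x : Fin n → Fin V) (u v : Fin n)
    (c : Fin J) (t : Fin n → Fin J) : 0 ≤ Gcomp M x u v c t := by
  unfold Gcomp
  split
  · split
    · exact mul_nonneg (Acoef_nonneg M x u _) (M.trans_nonneg _ _)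
    · exact le_refl 0
  · split
    · exact mul_nonneg (M.trans_nonneg _ _) (inP_nonneg M x v t)
    · exact le_refl 0

lemma parent_notin_chS (M : HMTModel J V n) {u : Fin n} (hu : u ≠ 0) :
    M.parent u ∉ chS M u := by
  rw [chS, Finset.mem_filter]
  rintro ⟨-, h⟩
  exact parent_notin_ch M hu h

lemma mem_chS (M : HMTModel J V n) {u v : Fin n} :
    v ∈ chS M u ↔ (v ≠ 0 ∧ M.parent v = u) := by
  rw [chS, Finset.mem_filter]
  simp

lemma ne_parent_of_mem_chS (M : HMTModel J V n) {u v : Fin n} (hu : u ≠ 0)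
    (hv : v ∈ chS M u) : v ≠ M.parent u :=
  fun he => parent_notin_chS M hu (he ▸ hv)

open Classical in
lemma hfac_main (M : HMTModel J V n) (x : Fin n → Fin V) {u : Fin n} (hu : u ≠ 0)
    (c : Fin J) (t : Fin n → (Fin n → Fin J)) :
    (∑ s : Fin n → Fin J,
        if s u = c ∧ ∀ v ∈ insert (M.parent u) (chS M u), Ycomp M u v s = t v
          then wgt M x s else 0)
      = M.emit c (x u) * ∏ v ∈ insert (M.parent u) (chS M u), Gcomp M x u v c (t v) := by
  classical
  by_cases hval : (∀ w, w ≠ M.parent u → t (M.parent u) w = 0)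
      ∧ ∀ v ∈ chS M u, (∀ w, ¬ M.inSubtree v w → t v w = 0)
  case neg =>
    have hR : ∏ v ∈ insert (M.parent u) (chS M u), Gcomp M x u v c (t v) = 0 := by
      rcases not_and_or.mp hval with h | h
      · refine Finset.prod_eq_zero (Finset.mem_insert_self (M.parent u) (chS M u)) ?_
        rw [Gcomp, if_pos rfl, if_neg h]
      · push_neg at h
        obtain ⟨v, hv, w, hw, hnw⟩ := h
        refine Finset.prod_eq_zero (Finset.mem_insert_of_mem hv) ?_
        rw [Gcomp, if_neg (ne_parent_of_mem_chS M hu hv),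
          if_neg (fun hh => hnw (hh w hw))]
    rw [hR, mul_zero]
    refine Finset.sum_eq_zero fun s _ => ?_
    rw [if_neg]
    rintro ⟨hsu, hY⟩
    apply hval
    constructor
    · intro w hw
      have h1 := hY (M.parent u) (Finset.mem_insert_self _ _)
      rw [Ycomp, if_pos rfl] at h1
      have h2 := congrFun h1 w
      rw [memVar] at h2
      rw [if_neg (fun hh => hw (Finset.mem_singleton.mp hh))] at h2
      exact h2.symm
    · intro v hv w hw
      have h1 := hY v (Finset.mem_insert_of_mem hv)
      rw [Ycomp, if_neg (ne_parent_of_mem_chS M hu hv)] at h1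
      have h2 := congrFun h1 v  -- dummy, replaced below
      have h3 := congrFun h1 w
      rw [subVar] at h3
      rw [if_neg hw] at h3
      exact h3.symm
  case pos =>
    obtain ⟨hvρ, hvch⟩ := hval
    set i := t (M.parent u) (M.parent u) with hidef
    have hcond : ∀ s : Fin n → Fin J,
        (s u = c ∧ ∀ v ∈ insert (M.parent u) (chS M u), Ycomp M u v s = t v)
          ↔ (s u = c ∧ s (M.parent u) = i
              ∧ ∀ v ∈ chS M u, ∀ w, M.inSubtree v w → s w = t v w) := by
      intro s
      constructor
      · rintro ⟨h1, h2⟩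
        refine ⟨h1, ?_, ?_⟩
        · have h3 := h2 (M.parent u) (Finset.mem_insert_self _ _)
          rw [Ycomp, if_pos rfl] at h3
          have h4 := congrFun h3 (M.parent u)
          rw [memVar, if_pos (Finset.mem_singleton_self _)] at h4
          exact h4
        · intro v hv w hw
          have h3 := h2 v (Finset.mem_insert_of_mem hv)
          rw [Ycomp, if_neg (ne_parent_of_mem_chS M hu hv)] at h3
          have h4 := congrFun h3 w
          rwa [subVar, if_pos hw] at h4
      · rintro ⟨h1, h2, h3⟩
        refine ⟨h1, fun v hv => ?_⟩
        rcases Finset.mem_insert.mp hv with hveq | hv2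
        · subst hveq
          rw [Ycomp, if_pos rfl]
          funext w
          rw [memVar]
          by_cases hwρ : w ∈ ({M.parent u} : Finset (Fin n))
          · rw [if_pos hwρ]
            rw [Finset.mem_singleton.mp hwρ, h2, hidef]
          · rw [if_neg hwρ]
            exact (hvρ w (fun hh => hwρ (hh ▸ Finset.mem_singleton_self _))).symm
        · rw [Ycomp, if_neg (ne_parent_of_mem_chS M hu hv2)]
          funext w
          rw [subVar]
          by_cases hw : M.inSubtree v w
          · rw [if_pos hw]; exact h3 v hv2 w hw
          · rw [if_neg hw]; exact (hvch v hv2 w hw).symm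
    have hweight : ∀ s : Fin n → Fin J, s u = c → s (M.parent u) = i →
        (∀ v ∈ chS M u, ∀ w, M.inSubtree v w → s w = t v w) →
        wgt M x s = outP M x u s * ((M.trans i c * M.emit c (x u))
          * ∏ v ∈ chS M u, (M.trans c (t v v) * inP M x v (t v))) := by
      intro s h1 h2 h3
      have hjoint : wgt M x s = ∏ v : Fin n, term M x s v := joint_eq_prod_term M x s
      rw [hjoint,
        ← Finset.prod_filter_mul_prod_filter_not Finset.univ
          (fun w => M.inSubtree u w) (term M x s)]
      have humem : u ∈ Finset.univ.filter (fun w => M.inSubtree u w) :=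
        Finset.mem_filter.mpr ⟨Finset.mem_univ _, inSubtree_refl M u⟩
      rw [← Finset.mul_prod_erase _ (term M x s) humem]
      have htu : term M x s u = M.trans i c * M.emit c (x u) := by
        rw [term, if_neg hu, h1, h2]
      have hdecomp : (Finset.univ.filter (fun w => M.inSubtree u w)).erase u
          = (chS M u).biUnion
              (fun v => Finset.univ.filter (fun w => M.inSubtree v w)) := by
        ext a
        simp only [Finset.mem_erase, Finset.mem_filter, Finset.mem_biUnion,
          Finset.mem_univ, true_and]
        constructor
        · rintro ⟨hne, hin⟩
          rcases inSubtree_cases M hin with he | ⟨v, hv, hvin⟩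
          · exact absurd he hne
          · exact ⟨v, mem_chS M |>.mpr hv, hvin⟩
        · rintro ⟨v, hv, hvin⟩
          have hv' := (mem_chS M).mp hv
          refine ⟨fun he => u_notin_child_subtree M hv' (he ▸ hvin), ?_⟩
          exact child_inSubtree M hv'.1 hv'.2 hvin
      have hdisj : ∀ v₁ ∈ chS M u, ∀ v₂ ∈ chS M u, v₁ ≠ v₂ →
          Disjoint (Finset.univ.filter (fun w => M.inSubtree v₁ w))
            (Finset.univ.filter (fun w => M.inSubtree v₂ w)) := by
        intro v₁ hv₁ v₂ hv₂ hne
        rw [Finset.disjoint_left]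
        intro a ha₁ ha₂
        exact hne (child_unique M ((mem_chS M).mp hv₁) ((mem_chS M).mp hv₂)
          (Finset.mem_filter.mp ha₁).2 (Finset.mem_filter.mp ha₂).2)
      rw [hdecomp, Finset.prod_biUnion hdisj]
      have hper : ∀ v ∈ chS M u,
          (∏ w ∈ Finset.univ.filter (fun w => M.inSubtree v w), term M x s w)
            = M.trans c (t v v) * inP M x v (t v) := by
        intro v hv
        have hv' := (mem_chS M).mp hv
        have hvmem : v ∈ Finset.univ.filter (fun w => M.inSubtree v w) :=
          Finset.mem_filter.mpr ⟨Finset.mem_univ _, inSubtree_refl M v⟩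
        rw [← Finset.mul_prod_erase _ (term M x s) hvmem]
        have htv : term M x s v = M.trans c (t v v) * M.emit (t v v) (x v) := by
          rw [term, if_neg hv'.1, hv'.2, h1, h3 v hv v (inSubtree_refl M v)]
        have hrest : ∏ w ∈ (Finset.univ.filter (fun w => M.inSubtree v w)).erase v,
            term M x s w
            = ∏ w ∈ (Finset.univ.filter (fun w => M.inSubtree v w)).erase v,
              term M x (t v) w := by
          refine Finset.prod_congr rfl fun w hw => ?_
          have hw1 := Finset.mem_erase.mp hw
          have hw2 := (Finset.mem_filter.mp hw1.2).2
          have hstep := step_into M hw2 hw1.1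
          refine term_congr M x (h3 v hv w hw2) (fun _ => h3 v hv _ hstep.2)
        rw [htv, hrest, inP]
        ring
      rw [Finset.prod_congr rfl hper, htu, outP]
      ring
    -- rewrite the sum using hcond and hweight, and pull out the constants
    have hsum1 : (∑ s : Fin n → Fin J,
        if s u = c ∧ ∀ v ∈ insert (M.parent u) (chS M u), Ycomp M u v s = t v
          then wgt M x s else 0)
        = (∑ s : Fin n → Fin J,
            if s u = c ∧ s (M.parent u) = i
                ∧ ∀ v ∈ chS M u, ∀ w, M.inSubtree v w → s w = t v w
              then outP M x u s else 0)
          * ((M.trans i c * M.emit c (x u))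
              * ∏ v ∈ chS M u, (M.trans c (t v v) * inP M x v (t v))) := by
      rw [Finset.sum_mul]
      refine Finset.sum_congr rfl fun s _ => ?_
      by_cases hs : s u = c ∧ s (M.parent u) = i
          ∧ ∀ v ∈ chS M u, ∀ w, M.inSubtree v w → s w = t v w
      · rw [if_pos ((hcond s).mpr hs), if_pos hs]
        exact hweight s hs.1 hs.2.1 hs.2.2
      · rw [if_neg (fun hh => hs ((hcond s).mp hh)), if_neg hs, zero_mul]
    have hAeq : (∑ s : Fin n → Fin J,
        if s u = c ∧ s (M.parent u) = i
            ∧ ∀ v ∈ chS M u, ∀ w, M.inSubtree v w → s w = t v w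
          then outP M x u s else 0) = Acoef M x u i := by
      rw [Acoef]
      rw [← Finset.sum_filter, ← Finset.sum_filter]
      have hρne : M.parent u ≠ u := ne_of_lt (M.parent_lt u hu)
      have hρnotin : ¬ M.inSubtree u (M.parent u) := not_inSubtree_parent M hu
      refine Finset.sum_nbij'
        (i := fun s => fun w => if M.inSubtree u w then 0 else s w)
        (j := fun s' => fun w => if w = u then c
          else if h : ∃ v, v ∈ chS M u ∧ M.inSubtree v w then t h.choose w else s' w)
        ?_ ?_ ?_ ?_ ?_
      · intro s hs
        obtain ⟨-, h1, h2, h3⟩ := Finset.mem_filter.mp hs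
        refine Finset.mem_filter.mpr ⟨Finset.mem_univ _, ?_, ?_⟩
        · show (if M.inSubtree u (M.parent u) then 0 else s (M.parent u)) = i
          rw [if_neg hρnotin]; exact h2
        · intro w hw
          show (if M.inSubtree u w then 0 else s w) = 0
          rw [if_pos hw]
      · intro s' hs'
        obtain ⟨-, hc1, hc2⟩ := Finset.mem_filter.mp hs'
        refine Finset.mem_filter.mpr ⟨Finset.mem_univ _, ?_, ?_, ?_⟩
        · show (if u = u then c else _) = c
          rw [if_pos rfl]
        · show (if M.parent u = u then c else _) = i
          rw [if_neg hρne]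
          have hnex : ¬ ∃ v, v ∈ chS M u ∧ M.inSubtree v (M.parent u) := by
            rintro ⟨v, hv, hvin⟩
            exact hρnotin
              (child_inSubtree M ((mem_chS M).mp hv).1 ((mem_chS M).mp hv).2 hvin)
          rw [dif_neg hnex]; exact hc1
        · intro v hv w hw
          have hv' := (mem_chS M).mp hv
          have hwne_u : w ≠ u := fun he => u_notin_child_subtree M hv' (he ▸ hw)
          show (if w = u then c else _) = t v w
          rw [if_neg hwne_u]
          have hex : ∃ v', v' ∈ chS M u ∧ M.inSubtree v' w := ⟨v, hv, hw⟩
          rw [dif_pos hex]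
          have hch : hex.choose = v := child_unique M
            ((mem_chS M).mp hex.choose_spec.1) hv' hex.choose_spec.2 hw
          rw [hch]
      · intro s hs
        obtain ⟨-, h1, h2, h3⟩ := Finset.mem_filter.mp hs
        funext w
        by_cases hwu : w = u
        · subst hwu
          show (if w = w then c else _) = s w
          rw [if_pos rfl]; exact h1.symm
        · show (if w = u then c else _) = s w
          rw [if_neg hwu]
          by_cases hex : ∃ v, v ∈ chS M u ∧ M.inSubtree v w
          · rw [dif_pos hex]
            exact (h3 hex.choose hex.choose_spec.1 w hex.choose_spec.2).symm
          · rw [dif_neg hex]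
            show (if M.inSubtree u w then 0 else s w) = s w
            have hni : ¬ M.inSubtree u w := by
              intro hin
              rcases inSubtree_cases M hin with he | ⟨v, hv, hvin⟩
              · exact hwu he
              · exact hex ⟨v, (mem_chS M).mpr hv, hvin⟩
            rw [if_neg hni]
      · intro s' hs'
        obtain ⟨-, hc1, hc2⟩ := Finset.mem_filter.mp hs'
        funext w
        by_cases hin : M.inSubtree u w
        · show (if M.inSubtree u w then 0 else _) = s' w
          rw [if_pos hin]; exact (hc2 w hin).symm
        · show (if M.inSubtree u w then 0 else _) = s' w
          rw [if_neg hin]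
          have hwu : w ≠ u := fun he => hin (he ▸ inSubtree_refl M u)
          show (if w = u then c
            else if h : ∃ v, v ∈ chS M u ∧ M.inSubtree v w then t h.choose w else s' w)
              = s' w
          rw [if_neg hwu]
          have hnex : ¬ ∃ v, v ∈ chS M u ∧ M.inSubtree v w := by
            rintro ⟨v, hv, hvin⟩
            exact hin
              (child_inSubtree M ((mem_chS M).mp hv).1 ((mem_chS M).mp hv).2 hvin)
          rw [dif_neg hnex]
      · intro s hs
        unfold outP
        refine Finset.prod_congr rfl fun w hw => ?_
        have hwout : ¬ M.inSubtree u w := (Finset.mem_filter.mp hw).2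
        refine term_congr M x ?_ ?_
        · exact (if_neg hwout).symm
        · intro hw0
          exact (if_neg (outside_parent M hwout hw0)).symm
    rw [hsum1, hAeq, Finset.prod_insert (parent_notin_chS M hu)]
    have hGρ : Gcomp M x u (M.parent u) c (t (M.parent u))
        = Acoef M x u i * M.trans i c := by
      rw [Gcomp, if_pos rfl, if_pos hvρ]
    have hGv : ∀ v ∈ chS M u, Gcomp M x u v c (t v)
        = M.trans c (t v v) * inP M x v (t v) := by
      intro v hv
      rw [Gcomp, if_neg (ne_parent_of_mem_chS M hu hv), if_pos (hvch v hv)]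
    rw [hGρ, Finset.prod_congr rfl hGv]
    ring

/-! ### Congruence lemmas for the final assembly -/

lemma Ycomp_parent (M : HMTModel J V n) (u : Fin n) :
    Ycomp M u (M.parent u) = M.memVar {M.parent u} := by
  unfold Ycomp; rw [if_pos rfl]

lemma Ycomp_child (M : HMTModel J V n) (u : Fin n) {v : Fin n} (hne : v ≠ M.parent u) :
    Ycomp M u v = M.subVar v := by
  unfold Ycomp; rw [if_neg hne]

open Classical in
lemma subVar_apply (M : HMTModel J V n) (v : Fin n) (s : Fin n → Fin J) (w : Fin n) :
    M.subVar v s w = if M.inSubtree v w then s w else 0 := rfl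

lemma memVar_apply (M : HMTModel J V n) (Vs : Finset (Fin n)) (s : Fin n → Fin J)
    (w : Fin n) : M.memVar Vs s w = if w ∈ Vs then s w else 0 := rfl

end HMTProof
set_option maxHeartbeats 2000000 in
/-- In a hidden Markov tree model, the conditional entropy of a
state subtree given the parent state satisfies the upward recursion: for every
non-root vertex `u`,
`H(S̄_u | S_{ρ(u)}, X = x) = ∑_{v∈c(u)} H(S̄_v | S_u, X = x) + H(S_u | S_{ρ(u)}, X = x)`,
the sum being empty when `u` is a leaf. -/
theorem hmt_subtree_entropy_upward_recursion
    {J V n : ℕ} [NeZero J] [NeZero n] (M : HMTModel J V n)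
    (x : Fin n → Fin V) (hx : 0 < M.pr (obsEq x))
    (u : Fin n) (hu : u ≠ 0) :
    M.condEntGiven (M.subVar u) (fun s => s (M.parent u)) (obsEq x)
      = (∑ v ∈ Finset.univ.filter (fun v : Fin n => v ≠ 0 ∧ M.parent v = u),
            M.condEntGiven (M.subVar v) (fun s => s u) (obsEq x))
        + M.condEntGiven (fun s => s u) (fun s => s (M.parent u)) (obsEq x) := by
  classical
  haveI : Nonempty (Fin J) := ⟨0⟩
  set w := HMTProof.wgt M x with hwdef
  have hwn : ∀ s, 0 ≤ w s := HMTProof.wgt_nonneg M x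
  set I : Finset (Fin n) := insert (M.parent u) (HMTProof.chS M u) with hIdef
  -- the multi-component entropy splitting
  have multi := HMTAux.Fent_multi_split (w := w) hwn (fun s => s u)
    (HMTProof.Ycomp M u) I (fun c => M.emit c (x u))
    (HMTProof.Gcomp M x u)
    (fun c => M.emit_nonneg c (x u))
    (fun v c tv => HMTProof.Gcomp_nonneg M x u v c tv)
    (fun c t => by
      refine Eq.trans ?_ (HMTProof.hfac_main M x hu c t)
      refine Finset.sum_congr rfl fun s _ => ?_
      by_cases hp : s u = c ∧ ∀ i ∈ I, HMTProof.Ycomp M u i s = t i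
      · rw [if_pos hp, if_pos hp]
      · rw [if_neg hp, if_neg hp])
  beta_reduce at multi
  -- congruence identifications
  have c1 : HMTAux.Fent w (fun s => (M.subVar u s, s (M.parent u)))
      = HMTAux.Fent w (fun s => (s u, fun i : {v // v ∈ I} => HMTProof.Ycomp M u i.1 s)) := by
    refine HMTAux.Fent_congr w _ _ fun s s' => ?_
    rw [Prod.mk.injEq, Prod.mk.injEq]
    constructor
    · rintro ⟨hsub, hρ⟩
      have hval : ∀ w', M.inSubtree u w' → s w' = s' w' := by
        intro w' hw'
        have h4 := congrFun hsub w'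
        rwa [HMTProof.subVar_apply, HMTProof.subVar_apply, if_pos hw', if_pos hw'] at h4
      refine ⟨hval u (HMTProof.inSubtree_refl M u), ?_⟩
      funext iv
      rcases Finset.mem_insert.mp iv.2 with hveq | hvch
      · rw [hveq, HMTProof.Ycomp_parent]
        funext w'
        rw [HMTProof.memVar_apply, HMTProof.memVar_apply]
        by_cases hw : w' ∈ ({M.parent u} : Finset (Fin n))
        · rw [if_pos hw, if_pos hw, Finset.mem_singleton.mp hw]; exact hρ
        · rw [if_neg hw, if_neg hw]
      · rw [HMTProof.Ycomp_child M u (HMTProof.ne_parent_of_mem_chS M hu hvch)]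
        funext w'
        rw [HMTProof.subVar_apply, HMTProof.subVar_apply]
        by_cases hw : M.inSubtree iv.1 w'
        · rw [if_pos hw, if_pos hw]
          have hv' := (HMTProof.mem_chS M).mp hvch
          exact hval w' (HMTProof.child_inSubtree M hv'.1 hv'.2 hw)
        · rw [if_neg hw, if_neg hw]
    · rintro ⟨hsu, hY⟩
      have hYv : ∀ v (hv : v ∈ I), HMTProof.Ycomp M u v s = HMTProof.Ycomp M u v s' :=
        fun v hv => congrFun hY ⟨v, hv⟩
      constructor
      · funext w'
        rw [HMTProof.subVar_apply, HMTProof.subVar_apply]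
        by_cases hw : M.inSubtree u w'
        · rw [if_pos hw, if_pos hw]
          rcases HMTProof.inSubtree_cases M hw with he | ⟨v, hv, hvin⟩
          · rw [he]; exact hsu
          · have hvmem : v ∈ HMTProof.chS M u := (HMTProof.mem_chS M).mpr hv
            have h5 := hYv v (Finset.mem_insert_of_mem hvmem)
            rw [HMTProof.Ycomp_child M u (HMTProof.ne_parent_of_mem_chS M hu hvmem)] at h5
            have h6 := congrFun h5 w'
            rwa [HMTProof.subVar_apply, HMTProof.subVar_apply, if_pos hvin,
              if_pos hvin] at h6
        · rw [if_neg hw, if_neg hw]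
      · have h5 := hYv (M.parent u) (Finset.mem_insert_self _ _)
        rw [HMTProof.Ycomp_parent] at h5
        have h6 := congrFun h5 (M.parent u)
        rwa [HMTProof.memVar_apply, HMTProof.memVar_apply,
          if_pos (Finset.mem_singleton_self _), if_pos (Finset.mem_singleton_self _)] at h6
  have c2 : ∀ v ∈ HMTProof.chS M u,
      HMTAux.Fent w (fun s => (s u, HMTProof.Ycomp M u v s))
        = HMTAux.Fent w (fun s => (M.subVar v s, s u)) := by
    intro v hv
    refine HMTAux.Fent_congr w _ _ fun s s' => ?_
    rw [HMTProof.Ycomp_child M u (HMTProof.ne_parent_of_mem_chS M hu hv),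
      Prod.mk.injEq, Prod.mk.injEq]
    exact and_comm
  have c3 : HMTAux.Fent w (fun s => (s u, HMTProof.Ycomp M u (M.parent u) s))
      = HMTAux.Fent w (fun s => (s u, s (M.parent u))) := by
    refine HMTAux.Fent_congr w _ _ fun s s' => ?_
    rw [HMTProof.Ycomp_parent, Prod.mk.injEq, Prod.mk.injEq]
    constructor
    · rintro ⟨h1, h2⟩
      refine ⟨h1, ?_⟩
      have h6 := congrFun h2 (M.parent u)
      rwa [HMTProof.memVar_apply, HMTProof.memVar_apply,
        if_pos (Finset.mem_singleton_self _), if_pos (Finset.mem_singleton_self _)] at h6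
    · rintro ⟨h1, h2⟩
      refine ⟨h1, funext fun w' => ?_⟩
      rw [HMTProof.memVar_apply, HMTProof.memVar_apply]
      by_cases hw : w' ∈ ({M.parent u} : Finset (Fin n))
      · rw [if_pos hw, if_pos hw, Finset.mem_singleton.mp hw]; exact h2
      · rw [if_neg hw, if_neg hw]
  rw [Finset.sum_insert (HMTProof.parent_notin_chS M hu), c3,
    Finset.sum_congr rfl c2, Finset.card_insert_of_notMem (HMTProof.parent_notin_chS M hu)]
    at multi
  replace multi := c1.trans multi
  -- rewrite all three conditional entropies
  have hchrw : Finset.univ.filter (fun v : Fin n => v ≠ 0 ∧ M.parent v = u)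
      = HMTProof.chS M u := rfl
  rw [HMTProof.condEntGiven_eq M x hx (M.subVar u) (fun s => s (M.parent u)),
    HMTProof.condEntGiven_eq M x hx (fun s => s u) (fun s => s (M.parent u)),
    hchrw,
    Finset.sum_congr rfl
      (fun v (hv : v ∈ HMTProof.chS M u) =>
        HMTProof.condEntGiven_eq M x hx (M.subVar v) (fun s => s u))]
  set Z := ∑ s : Fin n → Fin J, M.joint s x with hZdef
  have hsumdiv : (∑ v ∈ HMTProof.chS M u,
      (HMTAux.Fent w (fun s => (M.subVar v s, s u)) - HMTAux.Fent w (fun s => s u)) / Z)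
      = ((∑ v ∈ HMTProof.chS M u, HMTAux.Fent w (fun s => (M.subVar v s, s u)))
          - ((HMTProof.chS M u).card : ℝ) * HMTAux.Fent w (fun s => s u)) / Z := by
    rw [← Finset.sum_div]
    congr 1
    rw [Finset.sum_sub_distrib, Finset.sum_const, nsmul_eq_mul]
  rw [hsumdiv, ← add_div]
  congr 1
  push_cast at multi
  linarith [multi]
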